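/- For σ > 0, γ > 0, the Dual Voigt mixing density is the Levy(1/σ², γ²/σ⁴) density truncated above at 2/σ² and reflected about 2/σ²: (a) letting f_L(v) = [(γ/σ²)/√(2π)] · (v − 1/σ²)^{−3/2} · e^{−(γ/σ²)²/(2(v − 1/σ²))} for v > 1/σ² be the Levy(1/σ², γ²/σ⁴) density, one has ∫_{1/σ²}^{2/σ²} f_L(v) dv = 2(1 − Φ(γ/σ)); and (b) for 0 < v < 1/σ², q(v) = f_L(2/σ² − v)/(2(1 − Φ(γ/σ))), where q(v) = [1/(2(1 − Φ(γ/σ)))] · [(γ/σ²)/√(2π)] · (1/σ² − v)^{−3/2} · e^{−(γ/σ²)²/(2(1/σ² − v))}. In particular ∫_0^{1/σ²} q(v) dv = 1. -/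

import Mathlib

open MeasureTheory ProbabilityTheory Real

/-- The standard normal cumulative distribution function. -/
noncomputable def stdNormalCDF (t : ℝ) : ℝ :=
  ∫ s in Set.Iic t, (1 / Real.sqrt (2 * π)) * Real.exp (-s ^ 2 / 2)

/-- The Levy(1/σ², γ²/σ⁴) density, for v > 1/σ². -/
noncomputable def levyDensitySigma (σ γ : ℝ) (v : ℝ) : ℝ :=
  (γ / σ ^ 2) / Real.sqrt (2 * π) * (v - 1 / σ ^ 2) ^ (-(3 : ℝ) / 2) *
    Real.exp (-(γ / σ ^ 2) ^ 2 / (2 * (v - 1 / σ ^ 2)))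

/-- The mixing density of the Dual Voigt(γ, σ²), supported on (0, 1/σ²). -/
noncomputable def dualVoigtMixingDensity (σ γ : ℝ) (v : ℝ) : ℝ :=
  1 / (2 * (1 - stdNormalCDF (γ / σ))) * ((γ / σ ^ 2) / Real.sqrt (2 * π)) *
    (1 / σ ^ 2 - v) ^ (-(3 : ℝ) / 2) * Real.exp (-(γ / σ ^ 2) ^ 2 / (2 * (1 / σ ^ 2 - v)))

lemma stdNormal_integrable :
    Integrable (fun s : ℝ => (1 / Real.sqrt (2 * π)) * Real.exp (-s ^ 2 / 2)) := by
  have h := (integrable_exp_neg_mul_sq (by norm_num : (0:ℝ) < 1/2)).const_mul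
      (1 / Real.sqrt (2 * π))
  convert h using 2 with s
  ring_nf

lemma stdNormal_total :
    (∫ s : ℝ, (1 / Real.sqrt (2 * π)) * Real.exp (-s ^ 2 / 2)) = 1 := by
  have h : (∫ s : ℝ, Real.exp (-(1/2) * s ^ 2)) = Real.sqrt (π / (1/2)) :=
    integral_gaussian (1/2)
  have h2 : ∀ s : ℝ, -s ^ 2 / 2 = -(1/2) * s ^ 2 := fun s => by ring
  simp_rw [h2]
  rw [MeasureTheory.integral_const_mul, h]
  rw [show π / (1/2) = 2 * π by ring]
  have hπ : (0:ℝ) < 2 * π := by positivity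
  rw [one_div, inv_mul_cancel₀ (ne_of_gt (Real.sqrt_pos.mpr hπ))]

lemma stdNormal_tail (t : ℝ) :
    (∫ s in Set.Ioi t, (1 / Real.sqrt (2 * π)) * Real.exp (-s ^ 2 / 2))
      = 1 - stdNormalCDF t := by
  have h := intervalIntegral.integral_Iic_add_Ioi (μ := volume) (b := t)
    stdNormal_integrable.integrableOn stdNormal_integrable.integrableOn
  rw [stdNormal_total] at h
  rw [stdNormalCDF]
  linarith

lemma stdNormal_tail_pos (t : ℝ) : 0 < 1 - stdNormalCDF t := by
  rw [← stdNormal_tail t]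
  have hpos : ∀ s : ℝ, 0 < (1 / Real.sqrt (2 * π)) * Real.exp (-s ^ 2 / 2) := by
    intro s
    have : (0:ℝ) < Real.sqrt (2 * π) := Real.sqrt_pos.mpr (by positivity)
    positivity
  rw [setIntegral_pos_iff_support_of_nonneg_ae
    (Filter.Eventually.of_forall fun s => (hpos s).le) stdNormal_integrable.integrableOn]
  have : Function.support (fun s : ℝ => (1 / Real.sqrt (2 * π)) * Real.exp (-s ^ 2 / 2))
      = Set.univ := by
    rw [Set.eq_univ_iff_forall]
    intro s
    exact Function.mem_support.mpr (hpos s).ne'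
  rw [this, Set.univ_inter]
  simp [Real.volume_Ioi]

lemma rpow_sq_neg_three_half {x : ℝ} (hx : 0 < x) :
    (x ^ 2 : ℝ) ^ (-(3:ℝ) / 2) = (x ^ 3)⁻¹ := by
  have h1 : (x ^ 2 : ℝ) ^ (-(3:ℝ) / 2) = x ^ ((2:ℝ) * (-(3:ℝ) / 2)) := by
    rw [Real.rpow_mul hx.le, Real.rpow_two]
  rw [h1, show (2:ℝ) * (-(3:ℝ) / 2) = -(3:ℝ) by ring, Real.rpow_neg hx.le]
  norm_num

lemma levy_cov {b c : ℝ} (hb : 0 < b) (hc : 0 < c) :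
    (∫ u in Set.Ioo (0:ℝ) b,
        c / Real.sqrt (2 * π) * u ^ (-(3:ℝ) / 2) * Real.exp (-c ^ 2 / (2 * u)))
      = 2 * (1 - stdNormalCDF (c / Real.sqrt b)) := by
  set s0 := c / Real.sqrt b with hs0
  have hsb : (0:ℝ) < Real.sqrt b := Real.sqrt_pos.mpr hb
  have hs0pos : 0 < s0 := div_pos hc hsb
  have hs0sq : s0 ^ 2 = c ^ 2 / b := by
    rw [hs0, div_pow, Real.sq_sqrt hb.le]
  have hcb : c ^ 2 / s0 ^ 2 = b := by
    rw [hs0sq]; field_simp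
  have himg : (fun s : ℝ => c ^ 2 / s ^ 2) '' Set.Ioi s0 = Set.Ioo 0 b := by
    ext u
    constructor
    · rintro ⟨s, hs, rfl⟩
      have hs' : 0 < s := hs0pos.trans hs
      refine ⟨by positivity, ?_⟩
      rw [← hcb]
      apply div_lt_div_of_pos_left (by positivity) (by positivity)
      exact pow_lt_pow_left₀ hs hs0pos.le (by norm_num)
    · rintro ⟨hu0, hub⟩
      refine ⟨c / Real.sqrt u, ?_, ?_⟩
      · rw [hs0, Set.mem_Ioi]
        apply div_lt_div_of_pos_left hc (Real.sqrt_pos.mpr hu0)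
        exact Real.sqrt_lt_sqrt hu0.le hub
      · have : (c / Real.sqrt u) ^ 2 = c ^ 2 / u := by
          rw [div_pow, Real.sq_sqrt hu0.le]
        show c ^ 2 / (c / Real.sqrt u) ^ 2 = u
        rw [this]; field_simp
  have hderiv : ∀ s ∈ Set.Ioi s0, HasDerivWithinAt (fun s : ℝ => c ^ 2 / s ^ 2)
      (-2 * c ^ 2 / s ^ 3) (Set.Ioi s0) s := by
    intro s hs
    have hs' : 0 < s := hs0pos.trans hs
    have h := ((hasDerivAt_const s (c ^ 2)).div (hasDerivAt_pow 2 s)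
      (by positivity : s ^ 2 ≠ 0))
    refine h.hasDerivWithinAt.congr_deriv ?_
    rw [div_eq_div_iff (by positivity) (by positivity)]
    ring
  have hinj : Set.InjOn (fun s : ℝ => c ^ 2 / s ^ 2) (Set.Ioi s0) := by
    intro s hs t ht h
    have hs' : 0 < s := hs0pos.trans hs
    have ht' : 0 < t := hs0pos.trans ht
    simp only at h
    have hsq : s ^ 2 = t ^ 2 := by
      field_simp at h
      nlinarith [hc.ne']
    nlinarith [hsq]
  rw [← himg, MeasureTheory.integral_image_eq_integral_abs_deriv_smul
      measurableSet_Ioi hderiv hinj]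
  have hpt : Set.EqOn
      (fun s : ℝ => |(-2 * c ^ 2 / s ^ 3)| •
        (c / Real.sqrt (2 * π) * (c ^ 2 / s ^ 2) ^ (-(3:ℝ) / 2) *
          Real.exp (-c ^ 2 / (2 * (c ^ 2 / s ^ 2)))))
      (fun s : ℝ => 2 * ((1 / Real.sqrt (2 * π)) * Real.exp (-s ^ 2 / 2)))
      (Set.Ioi s0) := by
    intro s hs
    have hs' : 0 < s := hs0pos.trans hs
    have hsqrt : (0:ℝ) < Real.sqrt (2 * π) := Real.sqrt_pos.mpr (by positivity)
    simp only [smul_eq_mul]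
    have he : -c ^ 2 / (2 * (c ^ 2 / s ^ 2)) = -s ^ 2 / 2 := by
      field_simp
    have hr : (c ^ 2 / s ^ 2 : ℝ) ^ (-(3:ℝ) / 2) = ((c / s) ^ 3)⁻¹ := by
      rw [show (c ^ 2 / s ^ 2 : ℝ) = (c / s) ^ 2 by rw [div_pow],
        rpow_sq_neg_three_half (div_pos hc hs')]
    have habs : |(-2 * c ^ 2 / s ^ 3)| = 2 * c ^ 2 / s ^ 3 := by
      rw [abs_div, abs_of_nonpos (by nlinarith : -2 * c ^ 2 ≤ 0),
        abs_of_pos (by positivity : (0:ℝ) < s ^ 3)]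
      ring
    rw [he, hr, habs]
    field_simp
  rw [MeasureTheory.setIntegral_congr_fun measurableSet_Ioi hpt,
    MeasureTheory.integral_const_mul, stdNormal_tail]

/-- the Dual Voigt mixing density is the Levy(1/σ², γ²/σ⁴) density truncated
above at 2/σ² and reflected about 2/σ²: (a) the Levy mass of (1/σ², 2/σ²) is
2(1 − Φ(γ/σ)); (b) on (0, 1/σ²), q(v) = f_L(2/σ² − v)/(2(1 − Φ(γ/σ))); in particular
q integrates to one over (0, 1/σ²). -/
theorem dualVoigt_mixing_is_truncated_reflected_levy (σ γ : ℝ) (hσ : 0 < σ) (hγ : 0 < γ) :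
    (∫ v in Set.Ioo (1 / σ ^ 2) (2 / σ ^ 2), levyDensitySigma σ γ v) =
      2 * (1 - stdNormalCDF (γ / σ)) ∧
    (∀ v ∈ Set.Ioo (0 : ℝ) (1 / σ ^ 2),
      dualVoigtMixingDensity σ γ v =
        levyDensitySigma σ γ (2 / σ ^ 2 - v) / (2 * (1 - stdNormalCDF (γ / σ)))) ∧
    (∫ v in Set.Ioo (0 : ℝ) (1 / σ ^ 2), dualVoigtMixingDensity σ γ v) = 1 := by
  have hb : (0:ℝ) < 1 / σ ^ 2 := by positivity
  have hc : (0:ℝ) < γ / σ ^ 2 := by positivity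
  have hsqrtb : Real.sqrt (1 / σ ^ 2) = 1 / σ := by
    rw [one_div, Real.sqrt_inv, Real.sqrt_sq hσ.le, one_div]
  have hs0 : (γ / σ ^ 2) / Real.sqrt (1 / σ ^ 2) = γ / σ := by
    rw [hsqrtb]
    field_simp
  have hle : (1 / σ ^ 2 : ℝ) ≤ 2 / σ ^ 2 := by
    have h2 : (2 / σ ^ 2 : ℝ) = 2 * (1 / σ ^ 2) := by ring
    linarith
  have key := levy_cov hb hc
  rw [hs0] at key
  set G : ℝ → ℝ := fun u => (γ / σ ^ 2) / Real.sqrt (2 * π) * u ^ (-(3:ℝ) / 2) *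
      Real.exp (-(γ / σ ^ 2) ^ 2 / (2 * u)) with hG
  have ha : (∫ v in Set.Ioo (1 / σ ^ 2) (2 / σ ^ 2), levyDensitySigma σ γ v) =
      2 * (1 - stdNormalCDF (γ / σ)) := by
    calc (∫ v in Set.Ioo (1 / σ ^ 2) (2 / σ ^ 2), levyDensitySigma σ γ v)
        = ∫ v in (1 / σ ^ 2 : ℝ)..(2 / σ ^ 2), levyDensitySigma σ γ v := by
          rw [intervalIntegral.integral_of_le hle,
            MeasureTheory.integral_Ioc_eq_integral_Ioo]
      _ = ∫ v in (1 / σ ^ 2 : ℝ)..(2 / σ ^ 2), G (v - 1 / σ ^ 2) := by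
          apply intervalIntegral.integral_congr
          intro v _
          rfl
      _ = ∫ v in (1 / σ ^ 2 - 1 / σ ^ 2 : ℝ)..(2 / σ ^ 2 - 1 / σ ^ 2), G v :=
          intervalIntegral.integral_comp_sub_right G (1 / σ ^ 2)
      _ = ∫ v in (0 : ℝ)..(1 / σ ^ 2), G v := by
          rw [show (1 / σ ^ 2 - 1 / σ ^ 2 : ℝ) = 0 by ring,
            show (2 / σ ^ 2 - 1 / σ ^ 2 : ℝ) = 1 / σ ^ 2 by ring]
      _ = ∫ v in Set.Ioo (0 : ℝ) (1 / σ ^ 2), G v := by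
          rw [intervalIntegral.integral_of_le hb.le,
            MeasureTheory.integral_Ioc_eq_integral_Ioo]
      _ = 2 * (1 - stdNormalCDF (γ / σ)) := key
  have hbpart : ∀ v ∈ Set.Ioo (0 : ℝ) (1 / σ ^ 2),
      dualVoigtMixingDensity σ γ v =
        levyDensitySigma σ γ (2 / σ ^ 2 - v) / (2 * (1 - stdNormalCDF (γ / σ))) := by
    intro v _
    rw [dualVoigtMixingDensity, levyDensitySigma,
      show (2 / σ ^ 2 - v - 1 / σ ^ 2 : ℝ) = 1 / σ ^ 2 - v by ring]
    ring
  refine ⟨ha, hbpart, ?_⟩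
  have hpos := stdNormal_tail_pos (γ / σ)
  have hrefl : (∫ v in Set.Ioo (0:ℝ) (1 / σ ^ 2), levyDensitySigma σ γ (2 / σ ^ 2 - v)) =
      ∫ v in Set.Ioo (1 / σ ^ 2) (2 / σ ^ 2), levyDensitySigma σ γ v := by
    calc (∫ v in Set.Ioo (0:ℝ) (1 / σ ^ 2), levyDensitySigma σ γ (2 / σ ^ 2 - v))
        = ∫ v in (0:ℝ)..(1 / σ ^ 2), levyDensitySigma σ γ (2 / σ ^ 2 - v) := by
          rw [intervalIntegral.integral_of_le hb.le,
            MeasureTheory.integral_Ioc_eq_integral_Ioo]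
      _ = ∫ v in (2 / σ ^ 2 - 1 / σ ^ 2 : ℝ)..(2 / σ ^ 2 - 0), levyDensitySigma σ γ v :=
          intervalIntegral.integral_comp_sub_left (levyDensitySigma σ γ) (2 / σ ^ 2)
      _ = ∫ v in (1 / σ ^ 2 : ℝ)..(2 / σ ^ 2), levyDensitySigma σ γ v := by
          rw [show (2 / σ ^ 2 - 1 / σ ^ 2 : ℝ) = 1 / σ ^ 2 by ring,
            show (2 / σ ^ 2 - 0 : ℝ) = 2 / σ ^ 2 by ring]
      _ = ∫ v in Set.Ioo (1 / σ ^ 2) (2 / σ ^ 2), levyDensitySigma σ γ v := by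
          rw [intervalIntegral.integral_of_le hle,
            MeasureTheory.integral_Ioc_eq_integral_Ioo]
  rw [MeasureTheory.setIntegral_congr_fun measurableSet_Ioo hbpart,
    MeasureTheory.integral_div, hrefl, ha,
    div_self (ne_of_gt (by linarith : (0:ℝ) < 2 * (1 - stdNormalCDF (γ / σ))))]
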